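/- arXiv:1602.07824 — 4 statements merged into one kernel-verified Lean document; each statement's English description precedes it below -/
import Mathlib

section
/- Suppose λ : [0,T) → (0,∞) is differentiable and satisfies (2/3)R(t) - 2ρ₁(t) ≤ λ'(t)/λ(t) ≤ (2/3)R(t) - 2ρ₂(t), where for the Heisenberg solution R(t) = -(1/2)A(t)², ρ₁(t) = (1/2)A(t)³, ρ₂(t) = -(1/2)A(t)²B(t) with A, B as in the explicit Heisenberg backward Ricci flow solution. Then for t ∈ [0, -3/(16R₀)), λ(0)·exp((3A₀/4)[1-(1+(16R₀t)/3)^{-1/2}])·(1+(16R₀t)/3)^{1/8} ≤ λ(t) ≤ λ(0)·exp((3B₀/2)[1-(1+(16R₀t)/3)^{1/4}])·(1+(16R₀t)/3)^{1/8}. -/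
/-- monotonicity helper: if `g` has nonneg derivative on `[0,t]` then `g 0 ≤ g t`. -/
lemma aux_mono {t : ℝ} {g g' : ℝ → ℝ} (ht : 0 ≤ t)
    (hd : ∀ s ∈ Set.Icc (0:ℝ) t, HasDerivAt g (g' s) s)
    (hnn : ∀ s ∈ Set.Icc (0:ℝ) t, 0 ≤ g' s) : g 0 ≤ g t := by
  have hm : MonotoneOn g (Set.Icc (0:ℝ) t) := by
    apply monotoneOn_of_deriv_nonneg (convex_Icc 0 t)
      (fun s hs => (hd s hs).continuousAt.continuousWithinAt)
    · intro s hs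
      rw [interior_Icc] at hs
      exact ((hd s (Set.Ioo_subset_Icc_self hs)).differentiableAt).differentiableWithinAt
    · intro s hs
      rw [interior_Icc] at hs
      rw [(hd s (Set.Ioo_subset_Icc_self hs)).deriv]
      exact hnn s (Set.Ioo_subset_Icc_self hs)
  exact hm (Set.left_mem_Icc.2 ht) (Set.right_mem_Icc.2 ht) ht

/-- Heisenberg eigenvalue estimate: if `λ` satisfies the differential inequality
`(2/3)R - 2ρ₁ ≤ λ'/λ ≤ (2/3)R - 2ρ₂` along the explicit Heisenberg backward
Ricci flow solution, then the stated two-sided bound holds on `[0, -3/(16R₀))`. -/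
theorem stmt_3 (A₀ B₀ R₀ : ℝ) (hA₀ : 0 < A₀) (hB₀ : 0 < B₀)
    (hR₀ : R₀ = -(1/2) * A₀ ^ 2)
    (A B R ρ₁ ρ₂ : ℝ → ℝ)
    (hA : ∀ t, A t = A₀ * (1 + (16/3) * R₀ * t) ^ (-(1/2) : ℝ))
    (hB : ∀ t, B t = B₀ * (1 + (16/3) * R₀ * t) ^ ((1/4) : ℝ))
    (hR : ∀ t, R t = -(1/2) * (A t) ^ 2)
    (hρ₁ : ∀ t, ρ₁ t = (1/2) * (A t) ^ 3)
    (hρ₂ : ∀ t, ρ₂ t = -(1/2) * (A t) ^ 2 * B t)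
    (lam lam' : ℝ → ℝ)
    (hpos : ∀ t ∈ Set.Ico (0 : ℝ) (-3 / (16 * R₀)), 0 < lam t)
    (hderiv : ∀ t ∈ Set.Ico (0 : ℝ) (-3 / (16 * R₀)), HasDerivAt lam (lam' t) t)
    (hlow : ∀ t ∈ Set.Ico (0 : ℝ) (-3 / (16 * R₀)),
      (2/3) * R t - 2 * ρ₁ t ≤ lam' t / lam t)
    (hup : ∀ t ∈ Set.Ico (0 : ℝ) (-3 / (16 * R₀)),
      lam' t / lam t ≤ (2/3) * R t - 2 * ρ₂ t) :
    ∀ t ∈ Set.Ico (0 : ℝ) (-3 / (16 * R₀)),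
      lam 0 * Real.exp ((3 * A₀ / 4) * (1 - (1 + 16 * R₀ * t / 3) ^ (-(1/2) : ℝ)))
          * (1 + 16 * R₀ * t / 3) ^ ((1/8) : ℝ) ≤ lam t ∧
      lam t ≤ lam 0 * Real.exp ((3 * B₀ / 2) * (1 - (1 + 16 * R₀ * t / 3) ^ ((1/4) : ℝ)))
          * (1 + 16 * R₀ * t / 3) ^ ((1/8) : ℝ) := by
  intro t ht
  obtain ⟨ht0, htT⟩ := ht
  set c : ℝ := 16/3 * R₀ with hc
  have hR₀neg : R₀ < 0 := by nlinarith [pow_pos hA₀ 2]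
  have h16 : (16:ℝ) * R₀ < 0 := by linarith
  -- positivity of 1 + c*s on [0, t]
  have hUpos : ∀ s ∈ Set.Icc (0:ℝ) t, 0 < 1 + c * s := by
    intro s hs
    have hsT : s < -3 / (16 * R₀) := lt_of_le_of_lt hs.2 htT
    have h1 : (-3 / (16 * R₀)) * (16 * R₀) < s * (16 * R₀) :=
      mul_lt_mul_of_neg_right hsT h16
    have h2 : (-3 / (16 * R₀)) * (16 * R₀) = -3 := div_mul_cancel₀ (-3) h16.ne
    rw [h2] at h1
    have h3 : c * s = s * (16 * R₀) / 3 := by rw [hc]; ring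
    rw [h3]; linarith
  have hsub : Set.Icc (0:ℝ) t ⊆ Set.Ico (0:ℝ) (-3 / (16 * R₀)) :=
    fun s hs => ⟨hs.1, lt_of_le_of_lt hs.2 htT⟩
  have hU : ∀ s : ℝ, HasDerivAt (fun x => 1 + c * x) c s := by
    intro s
    simpa using ((hasDerivAt_id s).const_mul c).const_add 1
  have hpow : ∀ (p : ℝ) (s : ℝ), 0 < 1 + c * s →
      HasDerivAt (fun x => (1 + c * x) ^ p) (p * (1 + c * s) ^ (p - 1) * c) s := by
    intro p s hs
    exact (Real.hasDerivAt_rpow_const (Or.inl hs.ne')).comp s (hU s)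
  have hlogU : ∀ s : ℝ, 0 < 1 + c * s →
      HasDerivAt (fun x => Real.log (1 + c * x)) ((1 + c * s)⁻¹ * c) s := by
    intro s hs
    exact (Real.hasDerivAt_log hs.ne').comp s (hU s)
  have hsq : ∀ s : ℝ, 0 < 1 + c * s →
      ((1 + c * s) ^ (-(1/2) : ℝ)) ^ 2 = (1 + c * s) ^ (-1 : ℝ) := by
    intro s hs
    rw [← Real.rpow_natCast ((1 + c * s) ^ (-(1/2):ℝ)) 2, ← Real.rpow_mul hs.le]
    norm_num
  have hcb : ∀ s : ℝ, 0 < 1 + c * s →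
      ((1 + c * s) ^ (-(1/2) : ℝ)) ^ 3 = (1 + c * s) ^ (-(3/2) : ℝ) := by
    intro s hs
    rw [← Real.rpow_natCast ((1 + c * s) ^ (-(1/2):ℝ)) 3, ← Real.rpow_mul hs.le]
    norm_num
  have hABm : ∀ s : ℝ, 0 < 1 + c * s →
      (1 + c * s) ^ (-1 : ℝ) * (1 + c * s) ^ ((1/4) : ℝ) = (1 + c * s) ^ (-(3/4) : ℝ) := by
    intro s hs
    rw [← Real.rpow_add hs]; norm_num
  have hAs : ∀ s : ℝ, A s = A₀ * (1 + c * s) ^ (-(1/2) : ℝ) := by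
    intro s; rw [hA s, hc]
  have hBs : ∀ s : ℝ, B s = B₀ * (1 + c * s) ^ ((1/4) : ℝ) := by
    intro s; rw [hB s, hc]
  have hl0 : 0 < lam 0 := hpos 0 ⟨le_refl 0, lt_of_le_of_lt ht0 htT⟩
  have hlt : 0 < lam t := hpos t ⟨ht0, htT⟩
  have hut : 0 < 1 + c * t := hUpos t ⟨ht0, le_refl t⟩
  have hue : 1 + 16 * R₀ * t / 3 = 1 + c * t := by rw [hc]; ring
  have hlamlog : ∀ s ∈ Set.Icc (0:ℝ) t,
      HasDerivAt (fun x => Real.log (lam x)) (lam' s / lam s) s := by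
    intro s hs
    have hls := hpos s (hsub hs)
    have := (Real.hasDerivAt_log hls.ne').comp s (hderiv s (hsub hs))
    simpa [div_eq_mul_inv, mul_comm, Function.comp_def] using this
  constructor
  · -- lower bound
    have key := aux_mono (t := t)
      (g := fun s => Real.log (lam s) -
        ((3 * A₀ / 4) * (1 - (1 + c * s) ^ (-(1/2) : ℝ)) + (1/8) * Real.log (1 + c * s)))
      (g' := fun s => lam' s / lam s - ((2/3) * R s - 2 * ρ₁ s)) ht0
      (by
        intro s hs
        have hus := hUpos s hs
        have h2 := ((hpow (-(1/2)) s hus).const_sub 1).const_mul (3 * A₀ / 4)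
        have h3 := (hlogU s hus).const_mul (1/8 : ℝ)
        have hbig := (hlamlog s hs).sub (h2.add h3)
        have hval : 3 * A₀ / 4 * -(-(1 / 2) * (1 + c * s) ^ ((-(1 / 2) - 1 : ℝ)) * c)
            + 1 / 8 * ((1 + c * s)⁻¹ * c) = 2 / 3 * R s - 2 * ρ₁ s := by
          rw [hR s, hρ₁ s, hAs s, mul_pow, mul_pow, hsq s hus, hcb s hus]
          have e1 : ((-(1/2)) - 1 : ℝ) = (-(3/2) : ℝ) := by norm_num
          rw [e1, Real.rpow_neg_one, hc, hR₀]
          ring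
        rw [hval] at hbig
        exact hbig)
      (by
        intro s hs
        have := hlow s (hsub hs)
        linarith)
    simp only [mul_zero, add_zero, Real.one_rpow, Real.log_one, sub_self] at key
    rw [hue]
    have hexp : lam 0 * Real.exp ((3 * A₀ / 4) * (1 - (1 + c * t) ^ (-(1/2) : ℝ)))
          * (1 + c * t) ^ ((1/8) : ℝ)
        = Real.exp (Real.log (lam 0) + ((3 * A₀ / 4) * (1 - (1 + c * t) ^ (-(1/2) : ℝ))
          + (1/8) * Real.log (1 + c * t))) := by
      have h18 : (1 + c * t) ^ ((1/8) : ℝ) = Real.exp (Real.log (1 + c * t) * (1/8)) :=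
        Real.rpow_def_of_pos hut _
      rw [h18, Real.exp_add, Real.exp_add, Real.exp_log hl0,
        mul_comm ((1/8 : ℝ)) (Real.log (1 + c * t))]
      ring
    rw [hexp, ← Real.exp_log hlt]
    apply Real.exp_le_exp.2
    linarith
  · -- upper bound
    have key := aux_mono (t := t)
      (g := fun s => ((3 * B₀ / 2) * (1 - (1 + c * s) ^ ((1/4) : ℝ))
          + (1/8) * Real.log (1 + c * s)) - Real.log (lam s))
      (g' := fun s => ((2/3) * R s - 2 * ρ₂ s) - lam' s / lam s) ht0
      (by
        intro s hs
        have hus := hUpos s hs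
        have h2 := ((hpow ((1/4) : ℝ) s hus).const_sub 1).const_mul (3 * B₀ / 2)
        have h3 := (hlogU s hus).const_mul (1/8 : ℝ)
        have hbig := (h2.add h3).sub (hlamlog s hs)
        have hval : 3 * B₀ / 2 * -(1 / 4 * (1 + c * s) ^ ((1 / 4 - 1 : ℝ)) * c)
            + 1 / 8 * ((1 + c * s)⁻¹ * c) = 2 / 3 * R s - 2 * ρ₂ s := by
          rw [hR s, hρ₂ s, hAs s, hBs s, mul_pow, hsq s hus]
          have e1 : ((1/4) - 1 : ℝ) = (-(3/4) : ℝ) := by norm_num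
          rw [e1, ← hABm s hus, Real.rpow_neg_one, hc, hR₀]
          ring
        rw [hval] at hbig
        exact hbig)
      (by
        intro s hs
        have := hup s (hsub hs)
        linarith)
    simp only [mul_zero, add_zero, Real.one_rpow, Real.log_one, sub_self] at key
    rw [hue]
    have hexp : lam 0 * Real.exp ((3 * B₀ / 2) * (1 - (1 + c * t) ^ ((1/4) : ℝ)))
          * (1 + c * t) ^ ((1/8) : ℝ)
        = Real.exp (Real.log (lam 0) + ((3 * B₀ / 2) * (1 - (1 + c * t) ^ ((1/4) : ℝ))
          + (1/8) * Real.log (1 + c * t))) := by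
      have h18 : (1 + c * t) ^ ((1/8) : ℝ) = Real.exp (Real.log (1 + c * t) * (1/8)) :=
        Real.rpow_def_of_pos hut _
      rw [h18, Real.exp_add, Real.exp_add, Real.exp_log hl0,
        mul_comm ((1/8 : ℝ)) (Real.log (1 + c * t))]
      ring
    rw [hexp, ← Real.exp_log hlt]
    apply Real.exp_le_exp.2
    linarith
end

section
/- Let A, B, C : [0,T₊) → (0,∞) satisfy the E(2) backward Ricci flow system A' = (2/3)A(2A+B)(A-B), B' = -(2/3)B(2B+A)(A-B), C' = -(2/3)C(A-B)². Then (d/dt) ln(C/B) = 2B(A-B); hence if A(0) > B(0) and C(0) ≥ B(0), then C(t) > B(t) for all t > 0. -/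
/-- E(2): `(d/dt) ln(C/B) = 2B(A-B)`; hence if `A(0) > B(0)` and `C(0) ≥ B(0)`,
then `C(t) > B(t)` for all `t > 0`. -/
theorem stmt_13 (T : ℝ) (hT : 0 < T) (A B C : ℝ → ℝ)
    (hApos : ∀ t ∈ Set.Ico (0 : ℝ) T, 0 < A t)
    (hBpos : ∀ t ∈ Set.Ico (0 : ℝ) T, 0 < B t)
    (hCpos : ∀ t ∈ Set.Ico (0 : ℝ) T, 0 < C t)
    (hA : ∀ t ∈ Set.Ico (0 : ℝ) T,
      HasDerivAt A ((2/3) * A t * (2 * A t + B t) * (A t - B t)) t)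
    (hB : ∀ t ∈ Set.Ico (0 : ℝ) T,
      HasDerivAt B (-(2/3) * B t * (2 * B t + A t) * (A t - B t)) t)
    (hC : ∀ t ∈ Set.Ico (0 : ℝ) T,
      HasDerivAt C (-(2/3) * C t * (A t - B t) ^ 2) t) :
    (∀ t ∈ Set.Ico (0 : ℝ) T,
      HasDerivAt (fun s => Real.log (C s / B s)) (2 * B t * (A t - B t)) t) ∧
    (B 0 < A 0 → B 0 ≤ C 0 → ∀ t ∈ Set.Ioo (0 : ℝ) T, B t < C t) := by
  -- Part 1: the logarithmic derivative identity
  have part1 : ∀ t ∈ Set.Ico (0 : ℝ) T,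
      HasDerivAt (fun s => Real.log (C s / B s)) (2 * B t * (A t - B t)) t := by
    intro t ht
    have hBt := hBpos t ht
    have hCt := hCpos t ht
    have hBd := hB t ht
    have hCd := hC t ht
    have hlogC : HasDerivAt (fun s => Real.log (C s))
        ((-(2/3) * C t * (A t - B t) ^ 2) / C t) t := hCd.log hCt.ne'
    have hlogB : HasDerivAt (fun s => Real.log (B s))
        ((-(2/3) * B t * (2 * B t + A t) * (A t - B t)) / B t) t := hBd.log hBt.ne'
    have hsub := hlogC.sub hlogB
    have hval : (-(2/3) * C t * (A t - B t) ^ 2) / C t -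
        (-(2/3) * B t * (2 * B t + A t) * (A t - B t)) / B t
        = 2 * B t * (A t - B t) := by
      field_simp
      ring
    rw [hval] at hsub
    -- `log (C s / B s) = log (C s) - log (B s)` eventually near `t`
    have hevent : (fun s => Real.log (C s) - Real.log (B s))
        =ᶠ[nhds t] (fun s => Real.log (C s / B s)) := by
      have hBc : ContinuousAt B t := hBd.continuousAt
      have hCc : ContinuousAt C t := hCd.continuousAt
      have hBp : ∀ᶠ s in nhds t, 0 < B s := hBc.eventually (eventually_gt_nhds hBt)
      have hCp : ∀ᶠ s in nhds t, 0 < C s := hCc.eventually (eventually_gt_nhds hCt)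
      filter_upwards [hBp, hCp] with s hBs hCs
      rw [Real.log_div hCs.ne' hBs.ne']
    exact hsub.congr_of_eventuallyEq hevent.symm
  refine ⟨part1, ?_⟩
  intro hAB0 hCB0 t ht
  have htIco : t ∈ Set.Ico (0 : ℝ) T := ⟨le_of_lt ht.1, ht.2⟩
  -- Persistence: A s > B s for all s ∈ Ico 0 T
  have hDpos : ∀ s ∈ Set.Ico (0 : ℝ) T, 0 < A s - B s := by
    by_contra hcon
    push_neg at hcon
    obtain ⟨t₁, ht₁, ht₁le⟩ := hcon
    set D : ℝ → ℝ := fun s => A s - B s with hD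
    have hDcont : ∀ s ∈ Set.Ico (0 : ℝ) T, ContinuousAt D s := fun s hs =>
      ((hA s hs).continuousAt.sub (hB s hs).continuousAt)
    have hD0 : 0 < D 0 := sub_pos.mpr hAB0
    have ht₁0 : 0 < t₁ := by
      rcases lt_or_eq_of_le ht₁.1 with h | h
      · exact h
      · exfalso; rw [h] at hD0; simp only [hD] at hD0; linarith [ht₁le]
    -- there is a first zero via IVT
    have hcontIcc : ContinuousOn D (Set.Icc 0 t₁) := by
      intro s hs
      exact (hDcont s ⟨hs.1, lt_of_le_of_lt hs.2 ht₁.2⟩).continuousWithinAt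
    obtain ⟨t₀, ht₀mem, ht₀zero⟩ : ∃ t₀ ∈ Set.Icc (0:ℝ) t₁, D t₀ = 0 := by
      have := intermediate_value_Icc' (le_of_lt ht₁0) hcontIcc
        (a := 0) (b := t₁)
      have h0mem : (0:ℝ) ∈ Set.Icc (D t₁) (D 0) := ⟨ht₁le, le_of_lt hD0⟩
      obtain ⟨t₀, ht₀, hval⟩ := this h0mem
      exact ⟨t₀, ht₀, hval⟩
    have ht₀T : t₀ < T := lt_of_le_of_lt ht₀mem.2 ht₁.2
    have ht₀0 : 0 ≤ t₀ := ht₀mem.1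
    -- set up the linear ODE D' = f(t) D
    set f : ℝ → ℝ := fun s => (4/3) * ((A s)^2 + A s * B s + (B s)^2) with hf
    have hDder : ∀ s ∈ Set.Ico (0:ℝ) T, HasDerivAt D (f s * D s) s := by
      intro s hs
      have : HasDerivAt D _ s := (hA s hs).sub (hB s hs)
      convert this using 1
      simp only [hf, hD]
      ring
    set c : ℝ → ℝ := fun s => max 0 (min s t₀) with hc
    have hcmem : ∀ s, c s ∈ Set.Icc (0:ℝ) t₀ := by
      intro s
      constructor
      · exact le_max_left _ _
      · simp only [hc, max_le_iff]
        exact ⟨ht₀0, min_le_right _ _⟩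
    have hceq : ∀ s ∈ Set.Icc (0:ℝ) t₀, c s = s := by
      intro s hs
      simp only [hc]
      rw [min_eq_left hs.2, max_eq_right hs.1]
    have hfcont : ContinuousOn f (Set.Icc 0 t₀) := by
      intro s hs
      have hsmem : s ∈ Set.Ico (0:ℝ) T := ⟨hs.1, lt_of_le_of_lt hs.2 ht₀T⟩
      have hAc := (hA s hsmem).continuousAt
      have hBc := (hB s hsmem).continuousAt
      have : ContinuousAt f s := by
        simp only [hf]
        exact continuousAt_const.mul (((hAc.pow 2).add (hAc.mul hBc)).add (hBc.pow 2))
      exact this.continuousWithinAt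
    obtain ⟨K, hK⟩ := (isCompact_Icc (a := (0:ℝ)) (b := t₀)).exists_bound_of_continuousOn hfcont
    have hKnn : 0 ≤ K := le_trans (norm_nonneg _) (hK 0 ⟨le_refl _, ht₀0⟩)
    set v : ℝ → ℝ → ℝ := fun s x => f (c s) * x with hv
    have hlip : ∀ s, LipschitzOnWith K.toNNReal (v s) Set.univ := by
      intro s
      apply LipschitzOnWith.of_dist_le_mul
      intro x _ y _
      simp only [hv, Real.dist_eq]
      rw [← mul_sub, abs_mul]
      have : |f (c s)| ≤ K := by
        have := hK (c s) (hcmem s)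
        simpa [Real.norm_eq_abs] using this
      calc |f (c s)| * |x - y| ≤ K * |x - y| :=
            mul_le_mul_of_nonneg_right this (abs_nonneg _)
        _ = (K.toNNReal : ℝ) * |x - y| := by rw [Real.coe_toNNReal K hKnn]
    have huniq := ODE_solution_unique_of_mem_Icc_left (v := v)
      (s := fun _ => (Set.univ : Set ℝ)) (K := K.toNNReal) (f := D) (g := fun _ => 0)
      (a := 0) (b := t₀) (fun s _ => hlip s)
      (fun s hs => (hDcont s ⟨hs.1, lt_of_le_of_lt hs.2 ht₀T⟩).continuousWithinAt)
      (fun s hs => by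
        have hsIcc : s ∈ Set.Icc (0:ℝ) t₀ := ⟨le_of_lt hs.1, hs.2⟩
        have := (hDder s ⟨hsIcc.1, lt_of_le_of_lt hsIcc.2 ht₀T⟩).hasDerivWithinAt
          (s := Set.Iic s)
        convert this using 1
        simp [hv, hceq s hsIcc])
      (fun _ _ => Set.mem_univ _)
      (continuousOn_const)
      (fun s hs => by
        simpa [hv] using (hasDerivAt_const s (0:ℝ)).hasDerivWithinAt (s := Set.Iic s))
      (fun _ _ => Set.mem_univ _)
      (by simpa using ht₀zero)
    have : D 0 = 0 := huniq ⟨le_refl _, ht₀0⟩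
    linarith
  -- Monotonicity of log(C/B)
  set L : ℝ → ℝ := fun s => Real.log (C s / B s) with hL
  have hmono : StrictMonoOn L (Set.Icc 0 t) := by
    apply strictMonoOn_of_deriv_pos (convex_Icc 0 t)
    · intro s hs
      exact (part1 s ⟨hs.1, lt_of_le_of_lt hs.2 ht.2⟩).continuousAt.continuousWithinAt
    · intro s hs
      rw [interior_Icc] at hs
      have hsIco : s ∈ Set.Ico (0:ℝ) T := ⟨le_of_lt hs.1, lt_trans hs.2 ht.2⟩
      rw [(part1 s hsIco).deriv]
      have := hBpos s hsIco
      have := hDpos s hsIco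
      positivity
  have hLlt : L 0 < L t := hmono ⟨le_refl _, le_of_lt ht.1⟩
    ⟨le_of_lt ht.1, le_refl _⟩ ht.1
  have hB0 : 0 < B 0 := hBpos 0 ⟨le_refl _, hT⟩
  have hL0 : 0 ≤ L 0 := by
    simp only [hL]
    apply Real.log_nonneg
    rw [le_div_iff₀ hB0]
    linarith
  have hLt : 0 < L t := lt_of_le_of_lt hL0 hLlt
  have hBt : 0 < B t := hBpos t htIco
  have hCt : 0 < C t := hCpos t htIco
  have : 1 < C t / B t := by
    by_contra h
    push_neg at h
    have : Real.log (C t / B t) ≤ 0 := Real.log_nonpos (by positivity) h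
    simp only [hL] at hLt
    linarith
  rw [lt_div_iff₀ hBt] at this
  linarith
end

section
/- Let A, B, C : [0,T₊) → (0,∞) satisfy the SL(2,ℝ) backward Ricci flow system A' = -(2/3)[-A²(2A+B+C) + A(B-C)²], B' = -(2/3)[-B²(2B+A-C) + B(A+C)²], C' = -(2/3)[-C²(2C+A-B) + C(A+B)²]. Then (d/dt)(B-C) = (2/3)[2(B³-C³) + A(B²-C²) - A²(B-C)]; hence if B(0) ≥ C(0), then B(t) ≥ C(t) for all t ∈ [0,T₊). -/
open Set intervalIntegral MeasureTheory

/-- SL(2,ℝ): `(d/dt)(B-C) = (2/3)[2(B³-C³) + A(B²-C²) - A²(B-C)]`; hence if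
`B(0) ≥ C(0)` then `B(t) ≥ C(t)` for all `t ∈ [0,T₊)`. -/
theorem stmt_15 (T : ℝ) (hT : 0 < T) (A B C : ℝ → ℝ)
    (hApos : ∀ t ∈ Set.Ico (0 : ℝ) T, 0 < A t)
    (hBpos : ∀ t ∈ Set.Ico (0 : ℝ) T, 0 < B t)
    (hCpos : ∀ t ∈ Set.Ico (0 : ℝ) T, 0 < C t)
    (hA : ∀ t ∈ Set.Ico (0 : ℝ) T, HasDerivAt A
      (-(2/3) * (-(A t) ^ 2 * (2 * A t + B t + C t) + A t * (B t - C t) ^ 2)) t)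
    (hB : ∀ t ∈ Set.Ico (0 : ℝ) T, HasDerivAt B
      (-(2/3) * (-(B t) ^ 2 * (2 * B t + A t - C t) + B t * (A t + C t) ^ 2)) t)
    (hC : ∀ t ∈ Set.Ico (0 : ℝ) T, HasDerivAt C
      (-(2/3) * (-(C t) ^ 2 * (2 * C t + A t - B t) + C t * (A t + B t) ^ 2)) t) :
    (∀ t ∈ Set.Ico (0 : ℝ) T,
      HasDerivAt (fun s => B s - C s)
        ((2/3) * (2 * ((B t) ^ 3 - (C t) ^ 3) + A t * ((B t) ^ 2 - (C t) ^ 2)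
          - (A t) ^ 2 * (B t - C t))) t) ∧
    (C 0 ≤ B 0 → ∀ t ∈ Set.Ico (0 : ℝ) T, C t ≤ B t) := by
  -- the derivative of B - C
  have hderiv : ∀ t ∈ Set.Ico (0 : ℝ) T,
      HasDerivAt (fun s => B s - C s)
        ((2/3) * (2 * ((B t) ^ 3 - (C t) ^ 3) + A t * ((B t) ^ 2 - (C t) ^ 2)
          - (A t) ^ 2 * (B t - C t))) t := by
    intro t ht
    have := (hB t ht).sub (hC t ht)
    exact this.congr_deriv (by ring)
  refine ⟨hderiv, ?_⟩
  intro h0 t₀ ht₀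
  -- the coefficient function
  set g : ℝ → ℝ := fun t => (2/3) * (2 * ((B t) ^ 2 + B t * C t + (C t) ^ 2)
      + A t * (B t + C t) - (A t) ^ 2) with hg
  set f : ℝ → ℝ := fun s => B s - C s with hf
  have hcontA : ∀ t ∈ Set.Ico (0 : ℝ) T, ContinuousAt A t := fun t ht => (hA t ht).continuousAt
  have hcontB : ∀ t ∈ Set.Ico (0 : ℝ) T, ContinuousAt B t := fun t ht => (hB t ht).continuousAt
  have hcontC : ∀ t ∈ Set.Ico (0 : ℝ) T, ContinuousAt C t := fun t ht => (hC t ht).continuousAt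
  have hgcont : ∀ t ∈ Set.Ico (0 : ℝ) T, ContinuousAt g t := by
    intro t ht
    have := hcontA t ht; have := hcontB t ht; have := hcontC t ht
    fun_prop
  have hgcontOn : ContinuousOn g (Set.Ico (0 : ℝ) T) :=
    fun t ht => (hgcont t ht).continuousWithinAt
  -- f' = g * f on Ico 0 T
  have hf' : ∀ t ∈ Set.Ico (0 : ℝ) T, HasDerivAt f (g t * f t) t := by
    intro t ht
    have := hderiv t ht
    convert this using 1
    simp only [hg, hf]
    ring
  rcases ht₀ with ⟨ht₀0, ht₀T⟩
  have hsub : Set.Icc (0 : ℝ) t₀ ⊆ Set.Ico (0 : ℝ) T :=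
    fun s hs => ⟨hs.1, lt_of_le_of_lt hs.2 ht₀T⟩
  -- the primitive of g
  set G : ℝ → ℝ := fun t => ∫ s in (0:ℝ)..t, g s with hG
  have huIcc : Set.uIcc (0 : ℝ) t₀ = Set.Icc 0 t₀ := Set.uIcc_of_le ht₀0
  have hgint : IntegrableOn g (Set.uIcc (0 : ℝ) t₀) := by
    rw [huIcc]
    exact (hgcontOn.mono hsub).integrableOn_compact isCompact_Icc
  have hGcont : ContinuousOn G (Set.Icc (0 : ℝ) t₀) := by
    have := continuousOn_primitive_interval hgint
    rwa [huIcc] at this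
  -- derivative of G within Ici x for x ∈ Ico 0 t₀
  have hGderiv : ∀ x ∈ Set.Ico (0 : ℝ) t₀, HasDerivWithinAt G (g x) (Set.Ici x) x := by
    intro x hx
    have hxT : x ∈ Set.Ico (0 : ℝ) T := ⟨hx.1, lt_trans hx.2 ht₀T⟩
    have hint : IntervalIntegrable g volume 0 x := by
      refine (hgcontOn.mono ?_).intervalIntegrable
      rw [Set.uIcc_of_le hx.1]
      exact fun s hs => ⟨hs.1, lt_of_le_of_lt hs.2 (lt_trans hx.2 ht₀T)⟩
    have hmeas : StronglyMeasurableAtFilter g (nhdsWithin x (Set.Ioi x)) volume := by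
      refine ⟨Set.Ico 0 T, ?_, (hgcontOn.aestronglyMeasurable measurableSet_Ico)⟩
      have h1 : Set.Ioi x ∩ Set.Iio T ⊆ Set.Ico 0 T :=
        fun s hs => ⟨le_of_lt (lt_of_le_of_lt hx.1 hs.1), hs.2⟩
      exact mem_nhdsWithin.2 ⟨Set.Iio T, isOpen_Iio, lt_trans hx.2 ht₀T,
        fun s hs => h1 ⟨hs.2, hs.1⟩⟩
    have hcw : ContinuousWithinAt g (Set.Ioi x) x := (hgcont x hxT).continuousWithinAt
    exact intervalIntegral.integral_hasDerivWithinAt_right hint hmeas hcw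
  -- h = f * exp(-G) is constant on [0, t₀]
  set h : ℝ → ℝ := fun s => f s * Real.exp (-(G s)) with hh
  have hhcont : ContinuousOn h (Set.Icc (0 : ℝ) t₀) := by
    apply ContinuousOn.mul
    · intro s hs
      exact ((hcontB s (hsub hs)).sub (hcontC s (hsub hs))).continuousWithinAt
    · exact (Real.continuous_exp.comp_continuousOn hGcont.neg)
  have hhderiv : ∀ x ∈ Set.Ico (0 : ℝ) t₀, HasDerivWithinAt h 0 (Set.Ici x) x := by
    intro x hx
    have hxT : x ∈ Set.Ico (0 : ℝ) T := ⟨hx.1, lt_trans hx.2 ht₀T⟩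
    have h1 : HasDerivWithinAt f (g x * f x) (Set.Ici x) x :=
      (hf' x hxT).hasDerivWithinAt
    have h2 : HasDerivWithinAt (fun s => Real.exp (-(G s)))
        (Real.exp (-(G x)) * (-(g x))) (Set.Ici x) x :=
      (Real.hasDerivAt_exp (-(G x))).comp_hasDerivWithinAt (h := fun s => -(G s)) x ((hGderiv x hx).neg)
    have := h1.mul h2
    exact this.congr_deriv (by ring)
  have hconst := constant_of_has_deriv_right_zero hhcont hhderiv
  have ht0mem : t₀ ∈ Set.Icc (0 : ℝ) t₀ := Set.right_mem_Icc.2 ht₀0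
  have hht := hconst t₀ ht0mem
  have hG0 : G 0 = 0 := by simp [hG]
  have hf0 : 0 ≤ f 0 := sub_nonneg.2 h0
  have : f t₀ * Real.exp (-(G t₀)) = f 0 := by
    simpa [hh, hG0] using hht
  have hpos : 0 < Real.exp (-(G t₀)) := Real.exp_pos _
  have : 0 ≤ f t₀ := by
    nlinarith [this, hf0, hpos]
  simpa [hf, sub_nonneg] using this
end

section
/- Let A, B, C : [0,T₊) → (0,∞) satisfy the SL(2,ℝ) backward Ricci flow system, and suppose B(t) ≥ C(t) for all t. Then (d/dt) ln(A/C) = 2(A+B-C)(A+C) > 0; hence if A(t₁) > C(t₁) for some t₁, then A(t) > C(t) for all t ≥ t₁. -/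
/-- SL(2,ℝ) with `B ≥ C`: `(d/dt) ln(A/C) = 2(A+B-C)(A+C) > 0`; hence if
`A(t₁) > C(t₁)` for some `t₁`, then `A(t) > C(t)` for all `t ≥ t₁`. -/
theorem stmt_16 (T : ℝ) (hT : 0 < T) (A B C : ℝ → ℝ)
    (hApos : ∀ t ∈ Set.Ico (0 : ℝ) T, 0 < A t)
    (hBpos : ∀ t ∈ Set.Ico (0 : ℝ) T, 0 < B t)
    (hCpos : ∀ t ∈ Set.Ico (0 : ℝ) T, 0 < C t)
    (hBC : ∀ t ∈ Set.Ico (0 : ℝ) T, C t ≤ B t)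
    (hA : ∀ t ∈ Set.Ico (0 : ℝ) T, HasDerivAt A
      (-(2/3) * (-(A t) ^ 2 * (2 * A t + B t + C t) + A t * (B t - C t) ^ 2)) t)
    (hB : ∀ t ∈ Set.Ico (0 : ℝ) T, HasDerivAt B
      (-(2/3) * (-(B t) ^ 2 * (2 * B t + A t - C t) + B t * (A t + C t) ^ 2)) t)
    (hC : ∀ t ∈ Set.Ico (0 : ℝ) T, HasDerivAt C
      (-(2/3) * (-(C t) ^ 2 * (2 * C t + A t - B t) + C t * (A t + B t) ^ 2)) t) :
    (∀ t ∈ Set.Ico (0 : ℝ) T,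
      HasDerivAt (fun s => Real.log (A s / C s))
        (2 * (A t + B t - C t) * (A t + C t)) t ∧
      0 < 2 * (A t + B t - C t) * (A t + C t)) ∧
    (∀ t₁ ∈ Set.Ico (0 : ℝ) T, C t₁ < A t₁ →
      ∀ t ∈ Set.Ico (0 : ℝ) T, t₁ ≤ t → C t < A t) := by
  have key : ∀ t ∈ Set.Ico (0 : ℝ) T,
      HasDerivAt (fun s => Real.log (A s / C s))
        (2 * (A t + B t - C t) * (A t + C t)) t := by
    intro t ht
    have hAp := hApos t ht
    have hCp := hCpos t ht
    have hCne : C t ≠ 0 := ne_of_gt hCp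
    have hdiv := (hA t ht).div (hC t ht) hCne
    have hne : A t / C t ≠ 0 := div_ne_zero (ne_of_gt hAp) hCne
    have hlog := hdiv.log hne
    convert hlog using 1
    · rfl
    · have hAne : A t ≠ 0 := ne_of_gt hAp
      rw [Pi.div_apply]
      field_simp
      ring
  have pos : ∀ t ∈ Set.Ico (0 : ℝ) T, 0 < 2 * (A t + B t - C t) * (A t + C t) := by
    intro t ht
    have hAp := hApos t ht
    have hCp := hCpos t ht
    have hbc := hBC t ht
    nlinarith
  refine ⟨fun t ht => ⟨key t ht, pos t ht⟩, ?_⟩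
  intro t₁ ht₁ hlt t ht htt
  rcases eq_or_lt_of_le htt with rfl | hlt'
  · exact hlt
  · have hsub : Set.Icc t₁ t ⊆ Set.Ico (0 : ℝ) T := fun x hx =>
      ⟨le_trans ht₁.1 hx.1, lt_of_le_of_lt hx.2 ht.2⟩
    have hmono : StrictMonoOn (fun s => Real.log (A s / C s)) (Set.Icc t₁ t) := by
      apply StrictMonoOn.mono (s := Set.Icc t₁ t) ?_ (le_refl _)
      apply strictMonoOn_of_deriv_pos (convex_Icc t₁ t)
      · intro x hx
        exact ((key x (hsub hx)).differentiableAt).continuousAt.continuousWithinAt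
      · intro x hx
        rw [interior_Icc] at hx
        have hx' : x ∈ Set.Ico (0 : ℝ) T := hsub ⟨le_of_lt hx.1, le_of_lt hx.2⟩
        rw [(key x hx').deriv]
        exact pos x hx'
    have h1 : Real.log (A t₁ / C t₁) < Real.log (A t / C t) :=
      hmono (Set.left_mem_Icc.mpr htt) (Set.right_mem_Icc.mpr htt) hlt'
    have hAp := hApos t ht
    have hCp := hCpos t ht
    have hAp1 := hApos t₁ ht₁
    have hCp1 := hCpos t₁ ht₁
    have h2 : (0:ℝ) < Real.log (A t₁ / C t₁) :=
      Real.log_pos ((one_lt_div hCp1).mpr hlt)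
    have h3 : (1:ℝ) < A t / C t := by
      have := h2.trans h1
      rwa [Real.log_pos_iff (by positivity)] at this
    exact (one_lt_div hCp).mp h3
end
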